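/- Let p, q, r ≥ 2 be integers with gcd(p,r) = gcd(q,r) = 1. If there exist positive integers u, v with v·r - u·p·q = 1 and l(x) ∈ ℂ[x] satisfies (x^r+1)^p + (ε(2x^r+1))^q + x^r·l(x) = 0 where ε^q = -1, then z0 = l(x)^{uq}(x^r+1), z1 = ε·l(x)^{up}(2x^r+1), z2 = l(x)^v·x satisfy z0^p + z1^q + z2^r = 0. -/
import Mathlib


open Polynomial

/-- Given `vr - upq = 1`, `ε^q = -1` and `(x^r+1)^p + (ε(2x^r+1))^q + x^r l = 0`,
the polynomials `z0 = l^{uq}(x^r+1)`, `z1 = ε l^{up}(2x^r+1)`, `z2 = l^v x`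
satisfy `z0^p + z1^q + z2^r = 0`. -/
theorem horizontal_curve_coprime_case (p q r u v : ℕ)
    (hp : 2 ≤ p) (hq : 2 ≤ q) (hr : 2 ≤ r)
    (hpr : Nat.Coprime p r) (hqr : Nat.Coprime q r)
    (hu : 0 < u) (hv : 0 < v) (huv : v * r = u * p * q + 1)
    (ε : ℂ) (hε : ε ^ q = -1) (l : ℂ[X])
    (hl : (X ^ r + 1) ^ p + (C ε * (2 * X ^ r + 1)) ^ q + X ^ r * l = 0) :
    (l ^ (u * q) * (X ^ r + 1)) ^ p
      + (C ε * l ^ (u * p) * (2 * X ^ r + 1)) ^ q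
      + (l ^ v * X) ^ r = 0 := by
  have e1 : (l ^ (u * q)) ^ p = l ^ (u * p * q) := by
    rw [← pow_mul]; ring_nf
  have e2 : (l ^ (u * p)) ^ q = l ^ (u * p * q) := by
    rw [← pow_mul]
  have e3 : (l ^ v) ^ r = l ^ (u * p * q) * l := by
    rw [← pow_mul, huv, pow_succ]
  simp only [mul_pow] at *
  rw [e1, e2, e3]
  linear_combination (l ^ (u * p * q)) * hl
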